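/- For all a, b ∈ Z_{≥0}, one has ∑_{i = max(0, b-a)}^{b} q^{(a-1)(b-i)} C_i(q) [a choose b-i]_q = q^{2ab}, where C_i(q) = ∏_{k=i+1}^{b} (q^{2k} - 1) for i < b and C_b(q) = 1. -/

import Mathlib

noncomputable section

/-- The field `ℚ(q)` of rational functions. -/
abbrev K : Type := RatFunc ℚ

/-- The indeterminate `q`. -/
def q : K := RatFunc.X

/-- The balanced quantum integer `[k] = (q^k - q^{-k})/(q - q⁻¹)`. -/
def qint (k : ℤ) : K := (q ^ k - q ^ (-k)) / (q - q⁻¹)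

/-- The quantum factorial `[k]! = [1][2]⋯[k]`. -/
def qfact : ℕ → K
  | 0 => 1
  | k + 1 => qfact k * qint ((k : ℤ) + 1)

/-- The Gaussian binomial coefficient `[c choose d] = [c]!/([c-d]![d]!)` for `c ≥ d ≥ 0`,
and `0` otherwise. -/
def qbinom (c d : ℤ) : K :=
  if d ≤ c ∧ 0 ≤ d then qfact c.toNat / (qfact (c - d).toNat * qfact d.toNat) else 0

lemma q_ne : q ≠ 0 := RatFunc.X_ne_zero

lemma pow_sub_one_ne (n : ℕ) (hn : 1 ≤ n) : q ^ n - 1 ≠ 0 := by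
  have h : algebraMap (Polynomial ℚ) K (Polynomial.X ^ n - 1) = q ^ n - 1 := by
    simp [q, RatFunc.algebraMap_X]
  rw [← h]
  rw [map_ne_zero_iff _ (RatFunc.algebraMap_injective ℚ)]
  intro hc
  have := congrArg (fun p => Polynomial.coeff p n) hc
  have hn0 : n ≠ 0 := by omega
  simp [Polynomial.coeff_one, hn0] at this

lemma D_ne : q - q⁻¹ ≠ 0 := by
  have h2 : q ^ 2 - 1 ≠ 0 := pow_sub_one_ne 2 (by norm_num)
  intro hc
  apply h2
  have : q * (q - q⁻¹) = q ^ 2 - 1 := by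
    field_simp [q_ne]
  rw [← this, hc, mul_zero]

lemma qint_mul (n : ℕ) : qint (n:ℤ) * (q - q⁻¹) * q ^ n = q ^ (2*n) - 1 := by
  rw [qint, div_mul_cancel₀ _ D_ne, zpow_neg, zpow_natCast]
  field_simp [q_ne]
  ring

lemma qint_ne (n : ℕ) (hn : 1 ≤ n) : qint (n:ℤ) ≠ 0 := by
  intro hc
  have := qint_mul n
  rw [hc, zero_mul, zero_mul] at this
  exact pow_sub_one_ne (2*n) (by omega) this.symm

lemma qfact_ne (n : ℕ) : qfact n ≠ 0 := by
  induction n with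
  | zero => simp [qfact]
  | succ k ih =>
    rw [qfact]
    have : ((k:ℤ) + 1) = ((k+1 : ℕ) : ℤ) := by push_cast; ring
    rw [this]
    exact mul_ne_zero ih (qint_ne (k+1) (by omega))

lemma qint_core (j s : ℕ) :
    qint ((j:ℤ) + (s:ℤ) + 2) =
      q ^ (-(s:ℤ) - 1) * qint ((j:ℤ) + 1) + q ^ ((j:ℤ) + 1) * qint ((s:ℤ) + 1) := by
  have key : q ^ ((j:ℤ) + (s:ℤ) + 2) - q ^ (-((j:ℤ) + (s:ℤ) + 2)) =
      q ^ (-(s:ℤ) - 1) * (q ^ ((j:ℤ) + 1) - q ^ (-((j:ℤ) + 1))) +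
      q ^ ((j:ℤ) + 1) * (q ^ ((s:ℤ) + 1) - q ^ (-((s:ℤ) + 1))) := by
    rw [mul_sub, mul_sub, ← zpow_add₀ q_ne, ← zpow_add₀ q_ne, ← zpow_add₀ q_ne, ← zpow_add₀ q_ne]
    have e1 : (-(s:ℤ) - 1) + ((j:ℤ)+1) = (j:ℤ) - (s:ℤ) := by ring
    have e2 : (-(s:ℤ) - 1) + (-((j:ℤ)+1)) = -((j:ℤ)+(s:ℤ)+2) := by ring
    have e3 : ((j:ℤ)+1) + ((s:ℤ)+1) = (j:ℤ)+(s:ℤ)+2 := by ring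
    have e4 : ((j:ℤ)+1) + (-((s:ℤ)+1)) = (j:ℤ)-(s:ℤ) := by ring
    rw [e1, e2, e3, e4]
    ring
  rw [qint, qint, qint, ← mul_div_assoc, ← mul_div_assoc, ← add_div, key]

lemma qbinom_natCast (a j : ℕ) :
    qbinom (a:ℤ) (j:ℤ) = if j ≤ a then qfact a / (qfact (a-j) * qfact j) else 0 := by
  rw [qbinom]
  have h1 : ((a:ℤ) - (j:ℤ)).toNat = a - j := by omega
  by_cases h : j ≤ a
  · rw [if_pos ⟨by exact_mod_cast h, Int.natCast_nonneg j⟩, if_pos h, h1,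
      Int.toNat_natCast, Int.toNat_natCast]
  · rw [if_neg, if_neg h]
    intro hc
    exact h (by exact_mod_cast hc.1)

lemma pascal (j s : ℕ) :
    qbinom ((j:ℤ)+(s:ℤ)+1) ((j:ℤ)+1)
      = q^(-(s:ℤ)) * qbinom ((j:ℤ)+(s:ℤ)) (j:ℤ)
        + q^((j:ℤ)+1) * qbinom ((j:ℤ)+(s:ℤ)) ((j:ℤ)+1) := by
  have c1 : (j:ℤ)+(s:ℤ)+1 = ((j+s+1 : ℕ) : ℤ) := by push_cast; ring
  have c2 : (j:ℤ)+1 = ((j+1 : ℕ) : ℤ) := by push_cast; ring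
  have c3 : (j:ℤ)+(s:ℤ) = ((j+s : ℕ) : ℤ) := by push_cast; ring
  rw [c1, c2, c3, qbinom_natCast, qbinom_natCast, qbinom_natCast]
  cases s with
  | zero =>
    rw [if_pos (by omega), if_pos (by omega), if_neg (by omega)]
    have e1 : j + 0 + 1 - (j+1) = 0 := by omega
    have e2 : j + 0 - j = 0 := by omega
    have e3 : j + 0 + 1 = j + 1 := by omega
    have e4 : j + 0 = j := by omega
    rw [e1, e2, e3, e4]
    have h4 : qint ((j:ℤ)+1) ≠ 0 := by
      rw [show ((j:ℤ)+1) = ((j+1:ℕ):ℤ) by push_cast; ring]; exact qint_ne _ (by omega)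
    simp [qfact, div_self (qfact_ne _), div_self (mul_ne_zero (qfact_ne _) h4)]
  | succ s' =>
    rw [if_pos (by omega), if_pos (by omega), if_pos (by omega)]
    have e1 : j + (s'+1) + 1 - (j+1) = s' + 1 := by omega
    have e2 : j + (s'+1) - j = s' + 1 := by omega
    have e3 : j + (s'+1) - (j+1) = s' := by omega
    have e4 : j + (s'+1) + 1 = (j + s' + 1) + 1 := by omega
    have e5 : j + (s'+1) = (j + s') + 1 := by omega
    rw [e1, e2, e3, e4, e5]
    have f1 : qfact ((j+s'+1)+1) = qfact ((j+s')+1) * qint ((j:ℤ)+(s':ℤ)+2) := by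
      rw [qfact]
      have : ((j+s'+1 : ℕ):ℤ) + 1 = (j:ℤ)+(s':ℤ)+2 := by push_cast; ring
      rw [this]
    have f2 : qfact (j+1) = qfact j * qint ((j:ℤ)+1) := by rw [qfact]
    have f3 : qfact (s'+1) = qfact s' * qint ((s':ℤ)+1) := by rw [qfact]
    have g2 : q ^ (((j+1:ℕ):ℤ)) = q ^ (j+1) := zpow_natCast q (j+1)
    rw [f1, f2, f3, g2]
    set F := qfact ((j+s')+1) with hF
    set G := qfact j with hG
    set H := qfact s' with hH
    set A := qint ((j:ℤ)+1) with hA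
    set B := qint ((s':ℤ)+1) with hB
    set P := q ^ (s'+1) with hP
    set Q := q ^ (j+1) with hQ
    have h2 : G ≠ 0 := qfact_ne j
    have h3 : H ≠ 0 := qfact_ne s'
    have h4 : A ≠ 0 := by
      rw [hA, show ((j:ℤ)+1) = ((j+1:ℕ):ℤ) by push_cast; ring]; exact qint_ne _ (by omega)
    have h5 : B ≠ 0 := by
      rw [hB, show ((s':ℤ)+1) = ((s'+1:ℕ):ℤ) by push_cast; ring]; exact qint_ne _ (by omega)
    have h6 : P ≠ 0 := pow_ne_zero _ q_ne
    have hPz : P = q ^ ((s'+1 : ℕ) : ℤ) := (zpow_natCast q _).symm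
    have core2 : P * qint ((j:ℤ)+(s':ℤ)+2) = A + P * (Q * B) := by
      rw [qint_core, mul_add]
      congr 1
      rw [← mul_assoc, hPz, ← zpow_add₀ q_ne,
        show ((s'+1:ℕ):ℤ) + (-(s':ℤ) - 1) = 0 by push_cast; ring, zpow_zero, one_mul]
    apply mul_left_cancel₀ h6
    rw [mul_add, ← mul_assoc P (q ^ (-((s'+1:ℕ):ℤ))), hPz, ← zpow_add₀ q_ne,
      show ((s'+1:ℕ):ℤ) + (-((s'+1:ℕ):ℤ)) = 0 by ring, zpow_zero, one_mul, ← hPz,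
      ← mul_div_assoc, mul_left_comm, core2]
    field_simp [h2, h3, h4, h5, h6]

def gb : ℕ → ℕ → K
  | _, 0 => 1
  | 0, _+1 => 0
  | n+1, k+1 => gb n k + q^(2*(k+1)) * gb n (k+1)

lemma gb_zero_right (n : ℕ) : gb n 0 = 1 := by cases n <;> rfl

lemma gb_of_lt : ∀ n k : ℕ, n < k → gb n k = 0 := by
  intro n
  induction n with
  | zero => intro k hk; cases k with
    | zero => omega
    | succ k' => rfl
  | succ n ih =>
    intro k hk
    cases k with
    | zero => omega
    | succ k' =>
      rw [gb, ih k' (by omega), ih (k'+1) (by omega), mul_zero, add_zero]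

lemma newton (t : K) : ∀ n : ℕ,
    ∑ j ∈ Finset.range (n+1), gb n j * ∏ k ∈ Finset.range j, (t - q^(2*k)) = t^n := by
  intro n
  induction n with
  | zero => simp [gb_zero_right]
  | succ n ih =>
    have hP : ∀ j : ℕ, ∏ k ∈ Finset.range (j+1), (t - q^(2*k))
        = (∏ k ∈ Finset.range j, (t - q^(2*k))) * (t - q^(2*j)) := by
      intro j; rw [Finset.prod_range_succ]
    calc ∑ j ∈ Finset.range (n+1+1), gb (n+1) j * ∏ k ∈ Finset.range j, (t - q^(2*k))
        = (∑ j ∈ Finset.range (n+1), gb (n+1) (j+1) * ∏ k ∈ Finset.range (j+1), (t - q^(2*k)))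
            + gb (n+1) 0 * ∏ k ∈ Finset.range 0, (t - q^(2*k)) := by
          rw [Finset.sum_range_succ']
      _ = (∑ j ∈ Finset.range (n+1),
            (gb n j * ∏ k ∈ Finset.range (j+1), (t - q^(2*k))
              + q^(2*(j+1)) * gb n (j+1) * ∏ k ∈ Finset.range (j+1), (t - q^(2*k)))) + 1 := by
          rw [gb_zero_right]
          simp only [Finset.prod_range_zero, mul_one]
          congr 1
          refine Finset.sum_congr rfl fun j _ => ?_
          rw [gb, add_mul, mul_assoc]
      _ = ((∑ j ∈ Finset.range (n+1), gb n j * ∏ k ∈ Finset.range (j+1), (t - q^(2*k)))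
            + ∑ j ∈ Finset.range (n+1),
                q^(2*(j+1)) * gb n (j+1) * ∏ k ∈ Finset.range (j+1), (t - q^(2*k))) + 1 := by
          rw [Finset.sum_add_distrib]
      _ = ((∑ j ∈ Finset.range (n+1), gb n j * ∏ k ∈ Finset.range (j+1), (t - q^(2*k)))
            + ((∑ j ∈ Finset.range (n+1),
                q^(2*j) * gb n j * ∏ k ∈ Finset.range j, (t - q^(2*k))) - 1)) + 1 := by
          congr 1
          congr 1
          have := Finset.sum_range_succ'
            (fun j => q^(2*j) * gb n j * ∏ k ∈ Finset.range j, (t - q^(2*k))) (n+1)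
          -- ∑_{j<n+2} f j = ∑_{j<n+1} f (j+1) + f 0
          have h2 := Finset.sum_range_succ
            (fun j => q^(2*j) * gb n j * ∏ k ∈ Finset.range j, (t - q^(2*k))) (n+1)
          simp only [gb_of_lt n (n+1) (by omega), mul_zero, zero_mul, add_zero,
            Nat.mul_zero, pow_zero, one_mul, gb_zero_right, Finset.prod_range_zero,
            mul_one] at this h2
          rw [h2] at this
          rw [eq_sub_iff_add_eq]
          exact this.symm
      _ = ∑ j ∈ Finset.range (n+1),
            (gb n j * ∏ k ∈ Finset.range (j+1), (t - q^(2*k))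
              + q^(2*j) * gb n j * ∏ k ∈ Finset.range j, (t - q^(2*k))) := by
          rw [Finset.sum_add_distrib]; ring
      _ = ∑ j ∈ Finset.range (n+1),
            t * (gb n j * ∏ k ∈ Finset.range j, (t - q^(2*k))) := by
          refine Finset.sum_congr rfl fun j _ => ?_
          rw [hP j]; ring
      _ = t * t^n := by rw [← Finset.mul_sum, ih]
      _ = t^(n+1) := by ring

lemma qbinom_eq_gb : ∀ a j : ℕ,
    qbinom (a:ℤ) (j:ℤ) = q ^ ((j:ℤ) * ((j:ℤ) - (a:ℤ))) * gb a j := by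
  intro a
  induction a with
  | zero =>
    intro j
    cases j with
    | zero =>
      rw [qbinom, if_pos ⟨le_refl _, le_refl _⟩, gb_zero_right]
      simp [qfact]
    | succ j' =>
      rw [qbinom_natCast, if_neg (by omega), gb_of_lt 0 (j'+1) (by omega), mul_zero]
  | succ a' ih =>
    intro j
    cases j with
    | zero =>
      rw [qbinom_natCast, if_pos (by omega), gb_zero_right, Nat.sub_zero]
      simp [div_self (qfact_ne (a'+1)), show qfact 0 = 1 from rfl]
    | succ j' =>
      by_cases h : j' ≤ a'
      · have hc1 : ((a'+1 : ℕ):ℤ) = (j':ℤ) + ((a'-j' : ℕ):ℤ) + 1 := by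
          push_cast [Nat.cast_sub h]; ring
        have hc2 : ((j'+1 : ℕ):ℤ) = (j':ℤ) + 1 := by push_cast; ring
        have hc3 : (j':ℤ) + ((a'-j' : ℕ):ℤ) = ((a' : ℕ):ℤ) := by
          push_cast [Nat.cast_sub h]; ring
        rw [hc1, hc2, pascal j' (a'-j'), hc3, ih j', ← hc2, ih (j'+1)]
        have hgb : gb (a'+1) (j'+1) = gb a' j' + q^(2*(j'+1)) * gb a' (j'+1) := by rw [gb]
        rw [hgb, mul_add]
        congr 1
        · rw [← mul_assoc, ← zpow_add₀ q_ne]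
          congr 1
          push_cast [Nat.cast_sub h]
          ring
        · rw [← mul_assoc, ← mul_assoc, ← zpow_add₀ q_ne,
            ← zpow_natCast q (2*(j'+1)), ← zpow_add₀ q_ne]
          congr 1
          push_cast
          ring
      · rw [qbinom_natCast, if_neg (by omega), gb_of_lt (a'+1) (j'+1) (by omega), mul_zero]

lemma icc_to_range (b j : ℕ) (hj : j ≤ b) :
    ∏ k ∈ Finset.Icc (b-j+1) b, (q^(2*k) - 1) = ∏ i ∈ Finset.range j, (q^(2*(b-i)) - 1) := by
  rw [← Finset.Ico_add_one_right_eq_Icc, Finset.prod_Ico_eq_prod_range,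
    show b + 1 - (b-j+1) = j by omega,
    ← Finset.prod_range_reflect (fun i => q^(2*(b-i)) - 1) j]
  refine Finset.prod_congr rfl fun i hi => ?_
  have hi' : i < j := Finset.mem_range.mp hi
  congr 2
  omega

lemma range_prod_split (b j : ℕ) (hj : j ≤ b) :
    ∏ k ∈ Finset.range j, (q^(2*b) - q^(2*k))
      = q^(j*(j-1)) * ∏ i ∈ Finset.range j, (q^(2*(b-i)) - 1) := by
  have hstep : ∀ k ∈ Finset.range j, q^(2*b) - q^(2*k) = q^(2*k) * (q^(2*(b-k)) - 1) := by
    intro k hk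
    have hk' : k < j := Finset.mem_range.mp hk
    rw [mul_sub, mul_one, ← pow_add]
    congr 2
    omega
  rw [Finset.prod_congr rfl hstep, Finset.prod_mul_distrib]
  congr 1
  rw [Finset.prod_pow_eq_pow_sum]
  congr 1
  have h2 := Finset.sum_range_id_mul_two j
  have : ∑ k ∈ Finset.range j, 2 * k = 2 * ∑ k ∈ Finset.range j, k := by
    rw [Finset.mul_sum]
  omega

lemma term_eq (a b i : ℕ) (h1 : b - a ≤ i) (h2 : i ≤ b) :
    q ^ (((a : ℤ) - 1) * ((b : ℤ) - (i : ℤ))) *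
          (∏ k ∈ Finset.Icc (i + 1) b, (q ^ (2 * k) - 1)) *
          qbinom (a : ℤ) ((b : ℤ) - (i : ℤ))
      = gb a (b-i) * ∏ k ∈ Finset.range (b-i), (q^(2*b) - q^(2*k)) := by
  set j := b - i with hjdef
  have hja : j ≤ a := by omega
  have hjb : j ≤ b := by omega
  have hcast : (b:ℤ) - (i:ℤ) = (j:ℤ) := by omega
  have hicc : i + 1 = b - j + 1 := by omega
  rw [hcast, hicc, qbinom_eq_gb a j, icc_to_range b j hjb, range_prod_split b j hjb]
  have hnn : q^(j*(j-1)) = q^((j:ℤ)*((j:ℤ)-1)) := by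
    rw [← zpow_natCast]
    congr 1
    cases j <;> push_cast <;> ring
  rw [hnn]
  calc q ^ (((a:ℤ)-1)*(j:ℤ)) * (∏ i ∈ Finset.range j, (q^(2*(b-i)) - 1)) *
        (q ^ ((j:ℤ)*((j:ℤ)-(a:ℤ))) * gb a j)
      = (q ^ (((a:ℤ)-1)*(j:ℤ)) * q ^ ((j:ℤ)*((j:ℤ)-(a:ℤ)))) *
        ((∏ i ∈ Finset.range j, (q^(2*(b-i)) - 1)) * gb a j) := by ring
    _ = q ^ ((j:ℤ)*((j:ℤ)-1)) *
        ((∏ i ∈ Finset.range j, (q^(2*(b-i)) - 1)) * gb a j) := by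
        rw [← zpow_add₀ q_ne]; congr 1; ring
    _ = gb a j * (q ^ ((j:ℤ)*((j:ℤ)-1)) * ∏ i ∈ Finset.range j, (q^(2*(b-i)) - 1)) := by ring

/-- Lemma A.2: `∑_{i=max(0,b-a)}^{b} q^{(a-1)(b-i)} C_i(q) [a choose b-i] = q^{2ab}`, where
`C_i(q) = ∏_{k=i+1}^{b} (q^{2k} - 1)` (with `C_b(q) = 1`). -/
theorem sum_qbinom_identity (a b : ℕ) :
    ∑ i ∈ Finset.Icc (b - a) b,
        q ^ (((a : ℤ) - 1) * ((b : ℤ) - (i : ℤ))) *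
          (∏ k ∈ Finset.Icc (i + 1) b, (q ^ (2 * k) - 1)) *
          qbinom (a : ℤ) ((b : ℤ) - (i : ℤ))
      = q ^ (2 * a * b) := by
  have step1 : ∑ i ∈ Finset.Icc (b - a) b,
        q ^ (((a : ℤ) - 1) * ((b : ℤ) - (i : ℤ))) *
          (∏ k ∈ Finset.Icc (i + 1) b, (q ^ (2 * k) - 1)) *
          qbinom (a : ℤ) ((b : ℤ) - (i : ℤ))
      = ∑ j ∈ Finset.range (min a b + 1),
          gb a j * ∏ k ∈ Finset.range j, (q^(2*b) - q^(2*k)) := by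
    refine Finset.sum_nbij' (i := fun i => b - i) (j := fun j => b - j) ?_ ?_ ?_ ?_ ?_
    · intro i hi
      simp only [Finset.mem_Icc] at hi
      simp only [Finset.mem_range]
      omega
    · intro j hj
      simp only [Finset.mem_range] at hj
      simp only [Finset.mem_Icc]
      omega
    · intro i hi
      simp only [Finset.mem_Icc] at hi
      show b - (b - i) = i
      omega
    · intro j hj
      simp only [Finset.mem_range] at hj
      show b - (b - j) = j
      omega
    · intro i hi
      simp only [Finset.mem_Icc] at hi
      exact term_eq a b i hi.1 hi.2
  rw [step1]
  have step2 : ∑ j ∈ Finset.range (min a b + 1),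
        gb a j * ∏ k ∈ Finset.range j, (q^(2*b) - q^(2*k))
      = ∑ j ∈ Finset.range (a + 1),
          gb a j * ∏ k ∈ Finset.range j, (q^(2*b) - q^(2*k)) := by
    refine Finset.sum_subset ?_ ?_
    · intro x hx
      simp only [Finset.mem_range] at hx ⊢
      omega
    · intro x hx hx'
      simp only [Finset.mem_range] at hx hx'
      have hbx : b ∈ Finset.range x := Finset.mem_range.mpr (by omega)
      exact mul_eq_zero_of_right _ (Finset.prod_eq_zero hbx (by simp))
  rw [step2, newton (q^(2*b)) a, ← pow_mul]
  congr 1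
  ring

end
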